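/- For n ≥ 2, define Z(q,T1,T2) = [ (1 − q^{C(n,2)} T1^n T2)(1 − q^{C(n,2)+2} T1^{2n−1} T2) + q^{C(n+1,2)} T1^n T2 (1 − q^{−n+1})(1 − q^{−(n−1)} T1^{n−1}) ] / [ (1 − q^{C(n+1,2)} T2)(1 − q^{C(n+1,2)+1} T1^n T2)(1 − q^{C(n+1,2)+1} T1^{2n−1} T2) ]. Then substituting q → q^{−1}, T1 → T1^{−1}, T2 → T2^{−1} transforms Z into −q^{C(n+1,2)+2n} T2 · Z(q,T1,T2). -/

import Mathlib

noncomputable section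

/- The field ℚ(q, T₁, T₂) of rational functions in three variables. -/
abbrev Kfun : Type := FractionRing (MvPolynomial (Fin 3) ℚ)

def qv : Kfun := algebraMap (MvPolynomial (Fin 3) ℚ) Kfun (MvPolynomial.X 0)
def t1v : Kfun := algebraMap (MvPolynomial (Fin 3) ℚ) Kfun (MvPolynomial.X 1)
def t2v : Kfun := algebraMap (MvPolynomial (Fin 3) ℚ) Kfun (MvPolynomial.X 2)

/- Local bivariate conjugacy class zeta function of H_n (n ≥ 2). -/
def Zh (n : ℕ) (x u1 u2 : Kfun) : Kfun :=
  ((1 - x ^ (n.choose 2) * u1 ^ n * u2) *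
        (1 - x ^ (n.choose 2 + 2) * u1 ^ (2 * n - 1) * u2) +
      x ^ ((n + 1).choose 2) * u1 ^ n * u2 * (1 - x ^ (-(n : ℤ) + 1)) *
        (1 - x ^ (-((n : ℤ) - 1)) * u1 ^ (n - 1))) /
    ((1 - x ^ ((n + 1).choose 2) * u2) *
      (1 - x ^ ((n + 1).choose 2 + 1) * u1 ^ n * u2) *
      (1 - x ^ ((n + 1).choose 2 + 1) * u1 ^ (2 * n - 1) * u2))

lemma qv_ne : qv ≠ 0 := by
  simp only [qv, ne_eq, map_eq_zero_iff _ (IsFractionRing.injective (MvPolynomial (Fin 3) ℚ) Kfun)]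
  exact MvPolynomial.X_ne_zero 0

lemma t1v_ne : t1v ≠ 0 := by
  simp only [t1v, ne_eq, map_eq_zero_iff _ (IsFractionRing.injective (MvPolynomial (Fin 3) ℚ) Kfun)]
  exact MvPolynomial.X_ne_zero 1

lemma t2v_ne : t2v ≠ 0 := by
  simp only [t2v, ne_eq, map_eq_zero_iff _ (IsFractionRing.injective (MvPolynomial (Fin 3) ℚ) Kfun)]
  exact MvPolynomial.X_ne_zero 2

lemma nz (a b : ℕ) : (1 : Kfun) - qv ^ a * t1v ^ b * t2v ≠ 0 := by
  have h : (1 : MvPolynomial (Fin 3) ℚ) - MvPolynomial.X 0 ^ a * MvPolynomial.X 1 ^ b * MvPolynomial.X 2 ≠ 0 := by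
    intro h
    have := congrArg (MvPolynomial.eval (fun _ => (0:ℚ))) h
    simp at this
  intro h2
  apply h
  apply IsFractionRing.injective (MvPolynomial (Fin 3) ℚ) Kfun
  rw [map_sub, map_one, map_mul, map_mul, map_pow, map_pow, map_zero]
  exact h2

lemma nzinv (a b : ℕ) : (1 : Kfun) - qv⁻¹ ^ a * t1v⁻¹ ^ b * t2v⁻¹ ≠ 0 := by
  intro h
  apply nz a b
  have key : (qv ^ a * t1v ^ b * t2v) * (1 - qv⁻¹ ^ a * t1v⁻¹ ^ b * t2v⁻¹)
      = -(1 - qv ^ a * t1v ^ b * t2v) := by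
    simp only [inv_pow]
    field_simp [qv_ne, t1v_ne, t2v_ne]
    ring
  rw [h, mul_zero] at key
  have := key.symm
  rwa [neg_eq_zero] at this

/- Functional equation: inverting q, T₁, T₂ in Z yields −q^{C(n+1,2)+2n} T₂ · Z. -/
set_option maxHeartbeats 2000000 in
theorem stmt18 (n : ℕ) (hn : 2 ≤ n) :
    Zh n qv⁻¹ t1v⁻¹ t2v⁻¹ = -qv ^ ((n + 1).choose 2 + 2 * n) * t2v * Zh n qv t1v t2v := by
  obtain ⟨k, rfl⟩ : ∃ k, n = k + 1 := ⟨n - 1, by omega⟩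
  have e1 : 2 * (k + 1) - 1 = 2 * k + 1 := by omega
  have e2 : (k + 1 + 1).choose 2 = (k + 1).choose 2 + (k + 1) := by
    rw [Nat.choose_succ_succ]
    simp [Nat.choose_one_right, Nat.add_comm]
  have e3 : (-((k:ℤ) + 1) + 1) = -(k:ℤ) := by ring
  have e4 : (-(((k:ℤ) + 1) - 1)) = -(k:ℤ) := by ring
  have e5 : (k + 1) - 1 = k := by omega
  simp only [Zh, e1, e2, e5, Nat.cast_add, Nat.cast_one, e3, e4,
    zpow_neg, zpow_natCast]
  generalize (k + 1).choose 2 = A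
  have hq := qv_ne
  have h1 := t1v_ne
  have h2 := t2v_ne
  have d1 : (1 : Kfun) - qv ^ (A + (k + 1)) * t2v ≠ 0 := by simpa using nz (A + (k + 1)) 0
  have d2 := nz (A + (k + 1) + 1) (k + 1)
  have d3 := nz (A + (k + 1) + 1) (2 * k + 1)
  have dd1 : (1 : Kfun) - qv⁻¹ ^ (A + (k + 1)) * t2v⁻¹ ≠ 0 := by
    simpa using nzinv (A + (k + 1)) 0
  have dd2 := nzinv (A + (k + 1) + 1) (k + 1)
  have dd3 := nzinv (A + (k + 1) + 1) (2 * k + 1)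
  rw [← mul_div_assoc, div_eq_div_iff (mul_ne_zero (mul_ne_zero dd1 dd2) dd3)
    (mul_ne_zero (mul_ne_zero d1 d2) d3)]
  simp only [inv_pow]
  field_simp
  ring
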